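/- Any mapping f : 𝒟ₙ⁺ → 𝒟ₙ⁺ that is contracting for the stable semi-metric d_s (i.e., λ-Lipschitz with λ < 1) admits a unique fixed point Δ* ∈ 𝒟ₙ⁺ with Δ* = f(Δ*). -/

import Mathlib

noncomputable def dsn {n : ℕ} (Δ Δ' : Fin n → ℝ) : ℝ :=
  ⨆ i, |Δ i - Δ' i| / Real.sqrt (Δ i * Δ' i)

lemma exp_half_log {a : ℝ} (ha : 0 < a) : Real.exp (Real.log a / 2) = Real.sqrt a := by
  rw [Real.sqrt_eq_rpow, Real.rpow_def_of_pos ha]; ring_nf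

lemma abs_log_sub_log_le {a b : ℝ} (ha : 0 < a) (hb : 0 < b) :
    |Real.log a - Real.log b| ≤ |a - b| / Real.sqrt (a * b) := by
  wlog hab : b ≤ a generalizing a b
  · have := this hb ha (not_le.mp hab).le
    rwa [abs_sub_comm b a, mul_comm, abs_sub_comm (Real.log b)] at this
  have hlog : Real.log b ≤ Real.log a := Real.log_le_log hb hab
  set t := (Real.log a - Real.log b) / 2 with ht
  have ht0 : 0 ≤ t := by simp [ht]; linarith
  have hsa : (0:ℝ) < Real.sqrt a := Real.sqrt_pos.2 ha
  have hsb : (0:ℝ) < Real.sqrt b := Real.sqrt_pos.2 hb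
  have hexp : Real.exp t = Real.sqrt a / Real.sqrt b := by
    rw [ht, sub_div, Real.exp_sub, exp_half_log ha, exp_half_log hb]
  have hexp' : Real.exp (-t) = Real.sqrt b / Real.sqrt a := by
    rw [Real.exp_neg, hexp, inv_div]
  have hsq_a : Real.sqrt a * Real.sqrt a = a := Real.mul_self_sqrt ha.le
  have hsq_b : Real.sqrt b * Real.sqrt b = b := Real.mul_self_sqrt hb.le
  have key : |a - b| / Real.sqrt (a * b) = 2 * Real.sinh t := by
    rw [Real.sinh_eq, hexp, hexp', abs_of_nonneg (by linarith), Real.sqrt_mul ha.le]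
    field_simp
    nlinarith [hsq_a, hsq_b]
  have : t ≤ Real.sinh t := Real.self_le_sinh_iff.2 ht0
  rw [key, abs_of_nonneg (by linarith)]
  linarith

lemma dsn_nonneg {n : ℕ} (Δ Δ' : Fin n → ℝ) : 0 ≤ dsn Δ Δ' :=
  Real.iSup_nonneg fun i => by positivity

lemma le_dsn {n : ℕ} (Δ Δ' : Fin n → ℝ) (i : Fin n) :
    |Δ i - Δ' i| / Real.sqrt (Δ i * Δ' i) ≤ dsn Δ Δ' := by
  exact le_ciSup (f := fun j => |Δ j - Δ' j| / Real.sqrt (Δ j * Δ' j))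
    (Set.Finite.bddAbove (Set.finite_range _)) i

lemma dsn_le_sum {n : ℕ} (hn : 0 < n) (Δ Δ' : Fin n → ℝ) :
    dsn Δ Δ' ≤ ∑ i, |Δ i - Δ' i| / Real.sqrt (Δ i * Δ' i) := by
  have : Nonempty (Fin n) := ⟨⟨0, hn⟩⟩
  exact ciSup_le fun i => Finset.single_le_sum (f := fun j => |Δ j - Δ' j| / Real.sqrt (Δ j * Δ' j))
    (fun j _ => by positivity) (Finset.mem_univ i)

theorem fixed_point_of_contracting_stable {n : ℕ} (hn : 0 < n)
    (f : (Fin n → ℝ) → (Fin n → ℝ))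
    (hfpos : ∀ Δ, (∀ i, 0 < Δ i) → ∀ i, 0 < f Δ i)
    (lam : ℝ) (hlam0 : 0 ≤ lam) (hlam : lam < 1)
    (hlip : ∀ Δ Δ', (∀ i, 0 < Δ i) → (∀ i, 0 < Δ' i) →
      dsn (f Δ) (f Δ') ≤ lam * dsn Δ Δ') :
    ∃! Δstar : Fin n → ℝ, (∀ i, 0 < Δstar i) ∧ f Δstar = Δstar := by
  classical
  -- the iterated sequence
  set S : ℕ → Fin n → ℝ := fun k => f^[k] (fun _ => 1) with hS
  have hpos : ∀ k, ∀ i, 0 < S k i := by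
    intro k
    induction k with
    | zero => intro i; simp [hS]
    | succ k ih =>
        intro i
        have : S (k+1) = f (S k) := by
          simp only [hS, Function.iterate_succ_apply']
        rw [this]; exact hfpos _ ih i
  have hSsucc : ∀ k, S (k+1) = f (S k) := by
    intro k; simp only [hS, Function.iterate_succ_apply']
  set D0 : ℝ := dsn (S 0) (S 1) with hD0
  have hD : ∀ k, dsn (S k) (S (k+1)) ≤ lam ^ k * D0 := by
    intro k
    induction k with
    | zero => simp [hD0]
    | succ k ih =>
        have h1 : dsn (S (k+1)) (S (k+2)) ≤ lam * dsn (S k) (S (k+1)) := by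
          rw [hSsucc k, hSsucc (k+1), hSsucc k]
          exact hlip _ _ (hpos k) (fun i => by rw [← hSsucc k]; exact hpos (k+1) i)
        calc dsn (S (k+1)) (S (k+2)) ≤ lam * dsn (S k) (S (k+1)) := h1
          _ ≤ lam * (lam ^ k * D0) := by
              exact mul_le_mul_of_nonneg_left ih hlam0
          _ = lam ^ (k+1) * D0 := by ring
  -- log coordinates are Cauchy
  have hcauchy : ∀ i : Fin n, ∃ l : ℝ,
      Filter.Tendsto (fun k => Real.log (S k i)) Filter.atTop (nhds l) := by
    intro i
    have hc : CauchySeq (fun k => Real.log (S k i)) := by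
      apply cauchySeq_of_le_geometric lam D0 hlam
      intro k
      have h1 : |Real.log (S k i) - Real.log (S (k+1) i)| ≤
          |S k i - S (k+1) i| / Real.sqrt (S k i * S (k+1) i) :=
        abs_log_sub_log_le (hpos k i) (hpos (k+1) i)
      have h2 := le_dsn (S k) (S (k+1)) i
      have h3 := hD k
      rw [Real.dist_eq]
      calc |Real.log (S k i) - Real.log (S (k+1) i)| ≤ lam ^ k * D0 := by linarith
        _ = D0 * lam ^ k := by ring
    exact cauchySeq_tendsto_of_complete hc
  choose L hL using hcauchy
  set Δstar : Fin n → ℝ := fun i => Real.exp (L i) with hΔstar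
  have hstarpos : ∀ i, 0 < Δstar i := fun i => Real.exp_pos _
  -- S k i → Δstar i
  have hconv : ∀ i, Filter.Tendsto (fun k => S k i) Filter.atTop (nhds (Δstar i)) := by
    intro i
    have : (fun k => S k i) = fun k => Real.exp (Real.log (S k i)) := by
      funext k; rw [Real.exp_log (hpos k i)]
    rw [this]
    exact (Real.continuous_exp.continuousAt.tendsto).comp (hL i)
  -- dsn Δstar (S k) → 0
  have hdsn0 : Filter.Tendsto (fun k => dsn Δstar (S k)) Filter.atTop (nhds 0) := by
    have hterm : ∀ i : Fin n, Filter.Tendsto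
        (fun k => |Δstar i - S k i| / Real.sqrt (Δstar i * S k i)) Filter.atTop (nhds 0) := by
      intro i
      have hnum : Filter.Tendsto (fun k => |Δstar i - S k i|) Filter.atTop (nhds 0) := by
        have := ((tendsto_const_nhds (x := Δstar i)).sub (hconv i)).abs
        simpa using this
      have hden : Filter.Tendsto (fun k => Real.sqrt (Δstar i * S k i)) Filter.atTop
          (nhds (Real.sqrt (Δstar i * Δstar i))) :=
        (Real.continuous_sqrt.continuousAt.tendsto).comp
          ((tendsto_const_nhds (x := Δstar i)).mul (hconv i))
      have hden_ne : Real.sqrt (Δstar i * Δstar i) ≠ 0 := by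
        have := hstarpos i; positivity
      have := hnum.div hden hden_ne
      rw [zero_div] at this
      exact this
    have hsum : Filter.Tendsto
        (fun k => ∑ i, |Δstar i - S k i| / Real.sqrt (Δstar i * S k i)) Filter.atTop (nhds 0) := by
      have := tendsto_finset_sum Finset.univ (fun i _ => hterm i)
      simpa using this
    apply squeeze_zero (fun k => dsn_nonneg _ _) (fun k => dsn_le_sum hn _ _) hsum
  -- fixed point
  have hfix : f Δstar = Δstar := by
    funext i
    have hfp := hfpos Δstar hstarpos
    -- tendsto of S (k+1) i to f Δstar i
    have h1 : Filter.Tendsto (fun k => S (k+1) i) Filter.atTop (nhds (f Δstar i)) := by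
      rw [tendsto_iff_dist_tendsto_zero]
      have hb : ∀ k, dist (S (k+1) i) (f Δstar i) ≤
          (lam * dsn Δstar (S k)) * Real.sqrt (f Δstar i * S (k+1) i) := by
        intro k
        have hterm : |f Δstar i - f (S k) i| / Real.sqrt (f Δstar i * f (S k) i) ≤
            dsn (f Δstar) (f (S k)) := le_dsn _ _ i
        have hlip' : dsn (f Δstar) (f (S k)) ≤ lam * dsn Δstar (S k) :=
          hlip _ _ hstarpos (hpos k)
        have hsq : (0:ℝ) < Real.sqrt (f Δstar i * f (S k) i) := by
          have := hfp i; have := hfpos (S k) (hpos k) i; positivity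
        have h4 : |f Δstar i - f (S k) i| ≤
            (lam * dsn Δstar (S k)) * Real.sqrt (f Δstar i * f (S k) i) := by
          rw [div_le_iff₀ hsq] at hterm
          calc |f Δstar i - f (S k) i| ≤ dsn (f Δstar) (f (S k)) *
                Real.sqrt (f Δstar i * f (S k) i) := hterm
            _ ≤ (lam * dsn Δstar (S k)) * Real.sqrt (f Δstar i * f (S k) i) :=
                mul_le_mul_of_nonneg_right hlip' hsq.le
        rw [Real.dist_eq, hSsucc k, abs_sub_comm]
        exact h4
      have hrhs : Filter.Tendsto
          (fun k => (lam * dsn Δstar (S k)) * Real.sqrt (f Δstar i * S (k+1) i))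
          Filter.atTop (nhds 0) := by
        have h5 : Filter.Tendsto (fun k => lam * dsn Δstar (S k)) Filter.atTop (nhds 0) := by
          have := hdsn0.const_mul lam
          simpa using this
        have h6 : Filter.Tendsto (fun k => Real.sqrt (f Δstar i * S (k+1) i)) Filter.atTop
            (nhds (Real.sqrt (f Δstar i * Δstar i))) := by
          have hs : Filter.Tendsto (fun k => S (k+1) i) Filter.atTop (nhds (Δstar i)) :=
            (hconv i).comp (Filter.tendsto_add_atTop_nat 1)
          exact (Real.continuous_sqrt.continuousAt.tendsto).comp
            ((tendsto_const_nhds (x := f Δstar i)).mul hs)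
        have := h5.mul h6
        simpa using this
      exact squeeze_zero (fun k => dist_nonneg) hb hrhs
    have h2 : Filter.Tendsto (fun k => S (k+1) i) Filter.atTop (nhds (Δstar i)) :=
      (hconv i).comp (Filter.tendsto_add_atTop_nat 1)
    exact tendsto_nhds_unique h1 h2
  refine ⟨Δstar, ⟨hstarpos, hfix⟩, ?_⟩
  rintro Δ' ⟨hpos', hfix'⟩
  -- uniqueness
  have h1 : dsn Δ' Δstar ≤ lam * dsn Δ' Δstar := by
    have := hlip Δ' Δstar hpos' hstarpos
    rwa [hfix', hfix] at this
  have h2 : dsn Δ' Δstar ≤ 0 := by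
    nlinarith [dsn_nonneg Δ' Δstar]
  funext i
  have h3 := le_dsn Δ' Δstar i
  have h4 : (0:ℝ) ≤ |Δ' i - Δstar i| / Real.sqrt (Δ' i * Δstar i) := by positivity
  have h5 : |Δ' i - Δstar i| / Real.sqrt (Δ' i * Δstar i) = 0 := le_antisymm (h3.trans h2) h4
  have hsq : (0:ℝ) < Real.sqrt (Δ' i * Δstar i) := by
    have := hpos' i; have := hstarpos i; positivity
  have h6 : |Δ' i - Δstar i| = 0 := by
    rwa [div_eq_zero_iff, or_iff_left hsq.ne'] at h5
  have := abs_eq_zero.mp h6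
  linarith
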